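/- Let d, q > 0 and r₂, r₃ ≥ 0, and let A and B be as follows: A is the 3×3 matrix with rows [−2d−2q+r₁, d, d], [d+q, −d+r₂, 0], [d+q, 0, −d+r₃] (r₁ ≥ 0), and B is the 2×2 matrix with rows [−2d−2q+r₁, d], [2d+2q, −d+r₃]. Then: if r₂ = r₃ then s(A) = s(B); if r₂ > r₃ then s(A) > s(B); if r₂ < r₃ then s(A) < s(B). -/
import Mathlib


open Matrix

/-- Spectral bound: maximum real part of the (complex) eigenvalues. -/
noncomputable def specBound {n : ℕ} (M : Matrix (Fin n) (Fin n) ℝ) : ℝ :=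
  sSup {t : ℝ | ∃ μ ∈ spectrum ℂ (M.map Complex.ofReal), μ.re = t}

lemma specTri_quad_roots (a e k : ℝ) (hk : 0 < k) :
    ∃ μ₁ μ₂ : ℝ, μ₁ < μ₂ ∧ μ₁ + μ₂ = a + e ∧ μ₁ * μ₂ = a * e - k ∧
      0 < μ₂ - a ∧ 0 < μ₂ - e := by
  have h1 : 0 < (a - e) ^ 2 + 4 * k := by positivity
  have h2 : Real.sqrt ((a - e) ^ 2 + 4 * k) ^ 2 = (a - e) ^ 2 + 4 * k := Real.sq_sqrt h1.le
  have h3 : 0 < Real.sqrt ((a - e) ^ 2 + 4 * k) := Real.sqrt_pos.mpr h1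
  refine ⟨(a + e - Real.sqrt ((a - e) ^ 2 + 4 * k)) / 2,
    (a + e + Real.sqrt ((a - e) ^ 2 + 4 * k)) / 2, by linarith, by ring, by nlinarith,
    by nlinarith, by nlinarith⟩

lemma specTri_spec_two (a b c e : ℝ) (μ : ℂ) :
    μ ∈ spectrum ℂ ((!![a, b; c, e]).map Complex.ofReal) ↔
      (μ - a) * (μ - e) - b * c = 0 := by
  rw [spectrum.mem_iff, Matrix.isUnit_iff_isUnit_det, isUnit_iff_ne_zero, not_not]
  have : (algebraMap ℂ (Matrix (Fin 2) (Fin 2) ℂ) μ - (!![a, b; c, e]).map Complex.ofReal).det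
      = (μ - a) * (μ - e) - b * c := by
    simp [Matrix.det_fin_two, Matrix.algebraMap_matrix_apply]
  rw [this]

lemma specTri_spec_three (a b c e f g h i j : ℝ) (μ : ℂ) :
    μ ∈ spectrum ℂ ((!![a, b, c; e, f, g; h, i, j]).map Complex.ofReal) ↔
      (μ - a) * ((μ - f) * (μ - j) - g * i)
        - b * ((e : ℂ) * (μ - j) + g * h) + c * ((f - μ) * h - (e : ℂ) * i) = 0 := by
  rw [spectrum.mem_iff, Matrix.isUnit_iff_isUnit_det, isUnit_iff_ne_zero, not_not]
  have : (algebraMap ℂ (Matrix (Fin 3) (Fin 3) ℂ)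
        μ - (!![a, b, c; e, f, g; h, i, j]).map Complex.ofReal).det
      = (μ - a) * ((μ - f) * (μ - j) - g * i)
        - b * ((e : ℂ) * (μ - j) + g * h) + c * ((f - μ) * h - (e : ℂ) * i) := by
    simp [Matrix.det_fin_three, Matrix.algebraMap_matrix_apply]
    ring
  rw [this]

lemma specTri_pos (Aa Bb Ee c : ℝ) (hc : 0 < c) (h1 : 1 + c ≤ Aa) (h2 : 1 + c ≤ Bb)
    (h3 : 1 + c ≤ Ee) : c ≤ Aa * (Bb * Ee) := by
  have hBE : (1 + c) * (1 + c) ≤ Bb * Ee := mul_le_mul h2 h3 (by linarith) (by linarith)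
  have h4 : (1 + c) * ((1 + c) * (1 + c)) ≤ Aa * (Bb * Ee) :=
    mul_le_mul h1 hBE (by nlinarith) (by linarith)
  nlinarith [h4]

lemma specTri_cube (A B E u v w : ℝ) (hA : v + w ≤ A) (hB : u + v ≤ B) (hE : 0 ≤ E)
    (hu : 0 < u) (hv : 0 < v) (hw : 0 < w)
    (hkey : u * v * w = 2 * ((A * B + A * E + B * E) * (A + B + E) - A * B * E)) : False := by
  have hA0 : 0 < A := by linarith
  have hB0 : 0 < B := by linarith
  have hab : (v + w) * (u + v) ≤ A * B := mul_le_mul hA hB (by linarith) (by linarith)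
  have hab2 : (v + w) * (u + v) * ((v + w) + (u + v)) ≤ A * B * (A + B) :=
    mul_le_mul hab (by linarith) (by positivity) (by positivity)
  have hEterm : 0 ≤ E * (A + B) ^ 2 + E ^ 2 * (A + B) := by positivity
  have h3 : 2 * (u * v * w) ≤ (v + w) * (u + v) * ((v + w) + (u + v)) := by
    nlinarith [mul_pos (mul_pos hu hu) hv, mul_pos (mul_pos hu hv) hv,
      mul_pos (mul_pos hv hv) hv, mul_pos (mul_pos hv hv) hw, mul_pos (mul_pos hu hu) hw,
      mul_pos (mul_pos hu hw) hw, mul_pos (mul_pos hv hw) hw, mul_pos (mul_pos hu hv) hw]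
  nlinarith [hkey, hEterm, hab2, h3, mul_pos (mul_pos hu hv) hw]

/-- Trichotomy comparing the spectral bounds of the distributary
matrix A and its limiting matrix B according to the sign of `r₂ − r₃`. -/
theorem specBound_distributary_trichotomy (d q r₁ r₂ r₃ : ℝ) (hd : 0 < d)
    (hq : 0 < q) (hr₁ : 0 ≤ r₁) (hr₂ : 0 ≤ r₂) (hr₃ : 0 ≤ r₃) :
    (r₂ = r₃ →
      specBound !![-2 * d - 2 * q + r₁, d, d;
                   d + q, -d + r₂, 0;
                   d + q, 0, -d + r₃] =
        specBound !![-2 * d - 2 * q + r₁, d; 2 * d + 2 * q, -d + r₃]) ∧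
    (r₃ < r₂ →
      specBound !![-2 * d - 2 * q + r₁, d; 2 * d + 2 * q, -d + r₃] <
        specBound !![-2 * d - 2 * q + r₁, d, d;
                     d + q, -d + r₂, 0;
                     d + q, 0, -d + r₃]) ∧
    (r₂ < r₃ →
      specBound !![-2 * d - 2 * q + r₁, d, d;
                   d + q, -d + r₂, 0;
                   d + q, 0, -d + r₃] <
        specBound !![-2 * d - 2 * q + r₁, d; 2 * d + 2 * q, -d + r₃]) := by
  obtain ⟨μ₁, μ₂, hlt, hsum, hprod, hu, hv⟩ :=
    specTri_quad_roots (-2 * d - 2 * q + r₁) (-d + r₃) (d * (2 * d + 2 * q)) (by positivity)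
  have h1 := congrArg (Complex.ofReal) hsum
  have h2 := congrArg (Complex.ofReal) hprod
  push_cast at h1 h2
  -- spectrum of B
  have hBspec : ∀ μ : ℂ,
      μ ∈ spectrum ℂ ((!![-2 * d - 2 * q + r₁, d; 2 * d + 2 * q, -d + r₃]).map Complex.ofReal) ↔
        (μ - μ₁) * (μ - μ₂) = 0 := by
    intro μ
    rw [specTri_spec_two]
    constructor <;> intro h <;> push_cast at h
    · linear_combination h - μ * h1 + h2
    · push_cast
      linear_combination h + μ * h1 - h2
  -- spectrum of A
  have hAspec : ∀ μ : ℂ,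
      μ ∈ spectrum ℂ ((!![-2 * d - 2 * q + r₁, d, d;
                   d + q, -d + r₂, 0;
                   d + q, 0, -d + r₃]).map Complex.ofReal) ↔
        (μ - ((r₂ : ℂ) - d)) * ((μ - μ₁) * (μ - μ₂)) + (d : ℂ) * (d + q) * ((r₃ : ℂ) - r₂) = 0 := by
    intro μ
    rw [specTri_spec_three]
    constructor <;> intro h <;> push_cast at h
    · linear_combination h - (μ - ((r₂:ℂ) - d)) * μ * h1 + (μ - ((r₂:ℂ) - d)) * h2
    · push_cast
      linear_combination h + (μ - ((r₂:ℂ) - d)) * μ * h1 - (μ - ((r₂:ℂ) - d)) * h2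
  -- specBound of B equals μ₂
  have hSB : {t : ℝ | ∃ μ ∈ spectrum ℂ
        ((!![-2 * d - 2 * q + r₁, d; 2 * d + 2 * q, -d + r₃]).map Complex.ofReal), μ.re = t}
      = {μ₁, μ₂} := by
    ext t
    simp only [Set.mem_setOf_eq, hBspec, mul_eq_zero, sub_eq_zero, Set.mem_insert_iff,
      Set.mem_singleton_iff]
    constructor
    · rintro ⟨μ, (rfl | rfl), rfl⟩ <;> simp
    · rintro (h | h)
      · refine ⟨(μ₁ : ℂ), Or.inl rfl, ?_⟩
        rw [h]; exact Complex.ofReal_re _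
      · refine ⟨(μ₂ : ℂ), Or.inr rfl, ?_⟩
        rw [h]; exact Complex.ofReal_re _
  have hB2 : specBound !![-2 * d - 2 * q + r₁, d; 2 * d + 2 * q, -d + r₃] = μ₂ := by
    rw [specBound, hSB, csSup_pair]
    exact sup_eq_right.mpr hlt.le
  -- finiteness of the real-part set for A
  have hfinA : {t : ℝ | ∃ μ ∈ spectrum ℂ
        ((!![-2 * d - 2 * q + r₁, d, d;
                   d + q, -d + r₂, 0;
                   d + q, 0, -d + r₃]).map Complex.ofReal), μ.re = t}.Finite := by
    have h := (Matrix.finite_spectrum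
      ((!![-2 * d - 2 * q + r₁, d, d;
                   d + q, -d + r₂, 0;
                   d + q, 0, -d + r₃]).map Complex.ofReal)).image Complex.re
    exact h
  have huv : (μ₂ - (-2 * d - 2 * q + r₁)) * (μ₂ - (-d + r₃)) = d * (2 * d + 2 * q) := by
    linear_combination μ₂ * hsum - hprod
  refine ⟨?_, ?_, ?_⟩
  · -- r₂ = r₃
    intro hEq
    subst hEq
    rw [hB2, specBound]
    apply le_antisymm
    · apply csSup_le
      · exact ⟨μ₂, ⟨(μ₂ : ℂ), (hAspec _).mpr (by push_cast; ring), Complex.ofReal_re _⟩⟩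
      · rintro t ⟨μ, hμ, rfl⟩
        rw [hAspec] at hμ
        have hμ' : (μ - ((r₂ : ℂ) - d)) * ((μ - μ₁) * (μ - μ₂)) = 0 := by
          linear_combination hμ
        rcases mul_eq_zero.mp hμ' with h | h
        · have : μ = ((r₂ : ℂ) - d) := by linear_combination h
          rw [this]
          simp only [Complex.sub_re, Complex.ofReal_re]
          linarith
        · rcases mul_eq_zero.mp h with h | h
          · have : μ = (μ₁ : ℂ) := by linear_combination h
            rw [this, Complex.ofReal_re]; linarith
          · have : μ = (μ₂ : ℂ) := by linear_combination h
            rw [this, Complex.ofReal_re]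
    · exact le_csSup hfinA.bddAbove
        ⟨(μ₂ : ℂ), (hAspec _).mpr (by push_cast; ring), Complex.ofReal_re _⟩
  · -- r₃ < r₂
    intro hr
    set c : ℝ := d * (d + q) * (r₂ - r₃) with hc
    have hcpos : 0 < c := by
      have : 0 < r₂ - r₃ := by linarith
      positivity
    set F : ℝ → ℝ := fun t => (t + d - r₂) * ((t - μ₁) * (t - μ₂)) + d * (d + q) * (r₃ - r₂)
      with hF
    have hFcont : Continuous F := by fun_prop
    set t₁ : ℝ := max μ₂ (r₂ - d) + 1 + c with ht₁
    have hmax1 : μ₂ ≤ max μ₂ (r₂ - d) := le_max_left _ _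
    have hmax2 : r₂ - d ≤ max μ₂ (r₂ - d) := le_max_right _ _
    have hle : μ₂ ≤ t₁ := by simp only [ht₁]; linarith
    have hF1 : F μ₂ < 0 := by
      simp only [hF]
      nlinarith [mul_pos (mul_pos hd (by linarith : (0:ℝ) < d + q))
        (by linarith : (0:ℝ) < r₂ - r₃)]
    have hF2 : 0 ≤ F t₁ := by
      simp only [hF]
      have e1 : 1 + c ≤ t₁ + d - r₂ := by simp only [ht₁]; linarith
      have e2 : 1 + c ≤ t₁ - μ₂ := by simp only [ht₁]; linarith
      have e3 : 1 + c ≤ t₁ - μ₁ := by simp only [ht₁]; linarith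
      have := specTri_pos _ _ _ c hcpos e1 e3 e2
      linarith
    obtain ⟨x₀, hmem, hFx₀⟩ := intermediate_value_Icc hle hFcont.continuousOn ⟨hF1.le, hF2⟩
    have hx₀gt : μ₂ < x₀ := lt_of_le_of_ne hmem.1 (by
      rintro rfl
      rw [hFx₀] at hF1
      exact lt_irrefl 0 hF1)
    rw [hB2, specBound]
    have hx₀mem : x₀ ∈ {t : ℝ | ∃ μ ∈ spectrum ℂ
        ((!![-2 * d - 2 * q + r₁, d, d;
                   d + q, -d + r₂, 0;
                   d + q, 0, -d + r₃]).map Complex.ofReal), μ.re = t} := by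
      refine ⟨(x₀ : ℂ), (hAspec _).mpr ?_, Complex.ofReal_re _⟩
      have hFx₀' : (x₀ + d - r₂) * ((x₀ - μ₁) * (x₀ - μ₂)) + d * (d + q) * (r₃ - r₂) = 0 := by
        have := hFx₀
        rw [hF] at this
        simpa using this
      have hcast := congrArg (Complex.ofReal) hFx₀'
      push_cast at hcast ⊢
      linear_combination hcast
    exact lt_of_lt_of_le hx₀gt (le_csSup hfinA.bddAbove hx₀mem)
  · -- r₂ < r₃
    intro hr
    rw [hB2, specBound]
    have hne : {t : ℝ | ∃ μ ∈ spectrum ℂ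
        ((!![-2 * d - 2 * q + r₁, d, d;
                   d + q, -d + r₂, 0;
                   d + q, 0, -d + r₃]).map Complex.ofReal), μ.re = t}.Nonempty := by
      obtain ⟨μ, hμ⟩ := spectrum.nonempty_of_isAlgClosed_of_finiteDimensional ℂ
        ((!![-2 * d - 2 * q + r₁, d, d;
                   d + q, -d + r₂, 0;
                   d + q, 0, -d + r₃]).map Complex.ofReal)
      exact ⟨μ.re, μ, hμ, rfl⟩
    obtain ⟨μ, hμspec, hμre⟩ := hne.csSup_mem hfinA
    rw [← hμre]
    rw [hAspec] at hμspec
    -- extract real and imaginary parts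
    have hre := congrArg Complex.re hμspec
    have him := congrArg Complex.im hμspec
    simp only [Complex.add_re, Complex.add_im, Complex.mul_re, Complex.mul_im, Complex.sub_re,
      Complex.sub_im, Complex.ofReal_re, Complex.ofReal_im, Complex.zero_re, Complex.zero_im] at hre him
    set x := μ.re
    set y := μ.im
    have hIm : y * ((x + d - r₂) * (x - μ₁) + (x + d - r₂) * (x - μ₂) + (x - μ₁) * (x - μ₂)
        - y ^ 2) = 0 := by linear_combination him
    have hRe : (x + d - r₂) * ((x - μ₁) * (x - μ₂))
        - y ^ 2 * ((x + d - r₂) + (x - μ₁) + (x - μ₂)) + d * (d + q) * (r₃ - r₂) = 0 := by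
      linear_combination hre
    by_contra hcon
    push_neg at hcon
    have hxge : μ₂ ≤ x := hcon
    have ha' : μ₂ + d - r₃ + (r₃ - r₂) ≤ x + d - r₂ := by linarith
    have hb' : (μ₂ - (-2 * d - 2 * q + r₁)) + (μ₂ - (-d + r₃)) ≤ x - μ₁ := by linarith
    have he' : (0:ℝ) ≤ x - μ₂ := by linarith
    have hw : 0 < r₃ - r₂ := by linarith
    rcases eq_or_ne y 0 with hy | hy
    · have hzero : (x + d - r₂) * ((x - μ₁) * (x - μ₂)) + d * (d + q) * (r₃ - r₂) = 0 := by
        rw [hy] at hRe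
        linear_combination hRe
      have habe : 0 ≤ (x + d - r₂) * ((x - μ₁) * (x - μ₂)) :=
        mul_nonneg (by linarith) (mul_nonneg (by linarith) he')
      have hcp : 0 < d * (d + q) * (r₃ - r₂) :=
        mul_pos (mul_pos hd (by linarith)) hw
      linarith
    · have hy2 : 0 < y ^ 2 := by positivity
      have hP : (x + d - r₂) * (x - μ₁) + (x + d - r₂) * (x - μ₂) + (x - μ₁) * (x - μ₂)
          = y ^ 2 := by
        rcases mul_eq_zero.mp hIm with h | h
        · exact absurd h hy
        · linarith
      refine specTri_cube (x + d - r₂) (x - μ₁) (x - μ₂) (μ₂ - (-2 * d - 2 * q + r₁))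
        (μ₂ - (-d + r₃)) (r₃ - r₂) (by linarith) (by linarith) he' hu hv hw ?_
      linear_combination 2 * hRe - 2 * ((x + d - r₂) + (x - μ₁) + (x - μ₂)) * hP
        + (r₃ - r₂) * huv
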